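/- Let N ≥ 1, let D = diag(d_1, …, d_N) be a real diagonal N×N matrix with d_i > 0 for all i, and let B be a real N×N matrix with nonnegative entries such that ρ(B) > 0. Define Φ(λ) = ρ(λ²D + B)/λ for λ > 0, where ρ denotes the spectral radius. Then Φ attains a minimum on (0, ∞): there exists λ* ∈ (0, ∞) with Φ(λ*) = inf_{λ>0} Φ(λ) > 0. -/

import Mathlib

/-- The spectral radius of a real square matrix: the supremum of the absolute
values of its complex eigenvalues (roots of the characteristic polynomial over ℂ). -/
noncomputable def specRad {N : ℕ} (A : Matrix (Fin N) (Fin N) ℝ) : ℝ :=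
  sSup {x : ℝ | ∃ μ : ℂ, (A.map (fun r => (r : ℂ))).charpoly.IsRoot μ ∧ x = ‖μ‖}

namespace SpecRadAux

open Matrix Polynomial

variable {N : ℕ}

/-- complexification -/
noncomputable def cm (A : Matrix (Fin N) (Fin N) ℝ) : Matrix (Fin N) (Fin N) ℂ :=
  A.map (fun r => (r : ℂ))

lemma cm_eq (A : Matrix (Fin N) (Fin N) ℝ) : cm A = Complex.ofRealHom.mapMatrix A := by
  simp [cm, RingHom.mapMatrix_apply]; rfl

lemma cm_pow (A : Matrix (Fin N) (Fin N) ℝ) (n : ℕ) : cm (A ^ n) = (cm A) ^ n := by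
  simp [cm_eq, map_pow]

lemma specRad_def (A : Matrix (Fin N) (Fin N) ℝ) :
    specRad A = sSup {x : ℝ | ∃ μ : ℂ, (cm A).charpoly.IsRoot μ ∧ x = ‖μ‖} := rfl

lemma charpoly_ne_zero (M : Matrix (Fin N) (Fin N) ℂ) : M.charpoly ≠ 0 :=
  M.charpoly_monic.ne_zero

lemma setS_finite (A : Matrix (Fin N) (Fin N) ℝ) :
    {x : ℝ | ∃ μ : ℂ, (cm A).charpoly.IsRoot μ ∧ x = ‖μ‖}.Finite := by
  have h : {x : ℝ | ∃ μ : ℂ, (cm A).charpoly.IsRoot μ ∧ x = ‖μ‖}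
      = (fun μ : ℂ => ‖μ‖) '' {μ : ℂ | (cm A).charpoly.IsRoot μ} := by
    ext x; simp [eq_comm, and_comm]
  rw [h]
  exact (Polynomial.finite_setOf_isRoot (charpoly_ne_zero _)).image _

lemma exists_root (hN : 1 ≤ N) (M : Matrix (Fin N) (Fin N) ℂ) :
    ∃ μ : ℂ, M.charpoly.IsRoot μ := by
  apply Complex.exists_root
  have h1 : M.charpoly.natDegree = N := by
    simpa using M.charpoly_natDegree_eq_dim
  have := M.charpoly_monic.ne_zero
  rw [Polynomial.degree_eq_natDegree this, h1]
  exact_mod_cast hN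

lemma setS_nonempty (hN : 1 ≤ N) (A : Matrix (Fin N) (Fin N) ℝ) :
    {x : ℝ | ∃ μ : ℂ, (cm A).charpoly.IsRoot μ ∧ x = ‖μ‖}.Nonempty := by
  obtain ⟨μ, hμ⟩ := exists_root hN (cm A)
  exact ⟨‖μ‖, μ, hμ, rfl⟩

lemma specRad_mem (hN : 1 ≤ N) (A : Matrix (Fin N) (Fin N) ℝ) :
    ∃ μ : ℂ, (cm A).charpoly.IsRoot μ ∧ specRad A = ‖μ‖ :=
  (setS_nonempty hN A).csSup_mem (setS_finite A)

lemma abs_le_specRad (A : Matrix (Fin N) (Fin N) ℝ) {μ : ℂ}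
    (h : (cm A).charpoly.IsRoot μ) : ‖μ‖ ≤ specRad A :=
  le_csSup (setS_finite A).bddAbove ⟨μ, h, rfl⟩

lemma specRad_nonneg (hN : 1 ≤ N) (A : Matrix (Fin N) (Fin N) ℝ) : 0 ≤ specRad A := by
  obtain ⟨μ, _, h⟩ := specRad_mem hN A
  rw [h]; exact (norm_nonneg μ)

/-- evaluation of charpoly is a determinant -/
lemma charpoly_eval (M : Matrix (Fin N) (Fin N) ℂ) (r : ℂ) :
    M.charpoly.eval r = (Matrix.scalar (Fin N) r - M).det := by
  rw [Matrix.charpoly, _root_.eval_det, Matrix.matPolyEquiv_charmatrix]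
  simp

end SpecRadAux

namespace SpecRadAux

open Matrix Polynomial Filter

attribute [local instance] Matrix.linftyOpNormedAddCommGroup Matrix.linftyOpNormedRing
  Matrix.linftyOpNormedAlgebra Matrix.linftyOpNormedSpace

noncomputable instance : CompleteSpace (Matrix (Fin N) (Fin N) ℂ) :=
  (inferInstanceAs (CompleteSpace (Matrix (Fin N) (Fin N) ℂ)))

lemma mem_spectrum_iff (M : Matrix (Fin N) (Fin N) ℂ) (μ : ℂ) :
    μ ∈ spectrum ℂ M ↔ M.charpoly.IsRoot μ := by
  rw [spectrum.mem_iff]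
  have h : (algebraMap ℂ (Matrix (Fin N) (Fin N) ℂ)) μ - M = Matrix.scalar (Fin N) μ - M := rfl
  rw [h, Matrix.isUnit_iff_isUnit_det, isUnit_iff_ne_zero, not_not, IsRoot, charpoly_eval]

lemma coe_nnnorm_eq (μ : ℂ) : (‖μ‖₊ : ENNReal) = ENNReal.ofReal (‖μ‖) := by
  rw [← coe_nnnorm, ENNReal.ofReal_coe_nnreal]

lemma spectralRadius_eq (hN : 1 ≤ N) (A : Matrix (Fin N) (Fin N) ℝ) :
    spectralRadius ℂ (cm A) = ENNReal.ofReal (specRad A) := by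
  rw [spectralRadius]
  apply le_antisymm
  · apply iSup₂_le
    intro μ hμ
    rw [coe_nnnorm_eq]
    exact ENNReal.ofReal_le_ofReal (abs_le_specRad A ((mem_spectrum_iff _ _).1 hμ))
  · obtain ⟨μ, hμ, h⟩ := specRad_mem hN A
    rw [h, ← coe_nnnorm_eq]
    exact le_iSup₂ (f := fun (k : ℂ) (_ : k ∈ spectrum ℂ (cm A)) => (‖k‖₊ : ENNReal)) μ
      ((mem_spectrum_iff _ _).2 hμ)

lemma gelfand (A : Matrix (Fin N) (Fin N) ℝ) :
    Tendsto (fun n : ℕ => (‖cm (A ^ n)‖₊ : ENNReal) ^ (1 / n : ℝ)) atTop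
      (nhds (spectralRadius ℂ (cm A))) := by
  have := spectrum.pow_nnnorm_pow_one_div_tendsto_nhds_spectralRadius (cm A)
  simpa [cm_pow] using this

/-- entrywise nonnegativity and monotonicity of powers -/
lemma pow_entry_mono {A C : Matrix (Fin N) (Fin N) ℝ} (hA : ∀ i j, 0 ≤ A i j)
    (hC : ∀ i j, 0 ≤ C i j) (hAC : ∀ i j, A i j ≤ C i j) (n : ℕ) :
    ∀ i j, (0 ≤ (A ^ n) i j ∧ (A ^ n) i j ≤ (C ^ n) i j) := by
  induction n with
  | zero => intro i j; by_cases h : i = j <;> simp [Matrix.one_apply, h]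
  | succ n ih =>
      intro i j
      rw [pow_succ, pow_succ, Matrix.mul_apply, Matrix.mul_apply]
      constructor
      · exact Finset.sum_nonneg fun k _ => mul_nonneg (ih i k).1 (hA k j)
      · exact Finset.sum_le_sum fun k _ =>
          mul_le_mul (ih i k).2 (hAC k j) (hA k j) (le_trans (ih i k).1 (ih i k).2)

lemma nnnorm_cm_mono {A C : Matrix (Fin N) (Fin N) ℝ}
    (hA : ∀ i j, 0 ≤ A i j) (hAC : ∀ i j, A i j ≤ C i j) : ‖cm A‖₊ ≤ ‖cm C‖₊ := by
  rw [Matrix.linfty_opNNNorm_def, Matrix.linfty_opNNNorm_def]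
  apply Finset.sup_mono_fun
  intro i _
  apply Finset.sum_le_sum
  intro j _
  have h1 : ∀ (M : Matrix (Fin N) (Fin N) ℝ), ‖cm M i j‖ = |M i j| := by
    intro M; simp [cm, Real.norm_eq_abs]
  rw [← NNReal.coe_le_coe]
  show ‖cm A i j‖ ≤ ‖cm C i j‖
  rw [h1, h1, abs_of_nonneg (hA i j), abs_of_nonneg (le_trans (hA i j) (hAC i j))]
  exact hAC i j

/-- Monotonicity of the spectral radius on entrywise-nonnegative matrices. -/
lemma specRad_mono (hN : 1 ≤ N) {A C : Matrix (Fin N) (Fin N) ℝ}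
    (hA : ∀ i j, 0 ≤ A i j) (hAC : ∀ i j, A i j ≤ C i j) : specRad A ≤ specRad C := by
  have hC : ∀ i j, 0 ≤ C i j := fun i j => le_trans (hA i j) (hAC i j)
  have key : spectralRadius ℂ (cm A) ≤ spectralRadius ℂ (cm C) := by
    refine le_of_tendsto_of_tendsto' (gelfand A) (gelfand C) ?_
    intro n
    apply ENNReal.rpow_le_rpow _ (by positivity)
    exact_mod_cast nnnorm_cm_mono (fun i j => (pow_entry_mono hA hC hAC n i j).1)
      (fun i j => (pow_entry_mono hA hC hAC n i j).2)
  rw [spectralRadius_eq hN A, spectralRadius_eq hN C] at key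
  exact (ENNReal.ofReal_le_ofReal_iff (specRad_nonneg hN C)).1 key

end SpecRadAux

namespace SpecRadAux

open Matrix Polynomial

lemma cm_smul (c : ℝ) (A : Matrix (Fin N) (Fin N) ℝ) : cm (c • A) = (c : ℂ) • cm A := by
  ext i j; simp [cm]

lemma scalar_mul_eq (c μ : ℂ) :
    Matrix.scalar (Fin N) (c * μ) = c • Matrix.scalar (Fin N) μ := by
  ext i j
  simp only [Matrix.scalar_apply, Matrix.diagonal_apply, Matrix.smul_apply, smul_eq_mul]
  by_cases h : i = j <;> simp [h]

lemma root_smul {c : ℝ} (hc : c ≠ 0) (A : Matrix (Fin N) (Fin N) ℝ) {μ : ℂ}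
    (h : (cm A).charpoly.IsRoot μ) : (cm (c • A)).charpoly.IsRoot ((c : ℂ) * μ) := by
  rw [IsRoot, charpoly_eval] at h ⊢
  rw [cm_smul, scalar_mul_eq, ← smul_sub, Matrix.det_smul, h, mul_zero]

lemma specRad_smul (hN : 1 ≤ N) {c : ℝ} (hc : 0 < c) (A : Matrix (Fin N) (Fin N) ℝ) :
    specRad (c • A) = c * specRad A := by
  have habs : ∀ (b : ℝ) (μ : ℂ), ‖(b : ℂ) * μ‖ = |b| * ‖μ‖ := by
    intro b μ; rw [norm_mul, Complex.norm_real, Real.norm_eq_abs]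
  apply le_antisymm
  · obtain ⟨μ, hμ, h⟩ := specRad_mem hN (c • A)
    have h2 := root_smul (inv_ne_zero hc.ne') (c • A) hμ
    rw [smul_smul, inv_mul_cancel₀ hc.ne', one_smul] at h2
    have h3 := abs_le_specRad A h2
    rw [habs, abs_of_pos (inv_pos.2 hc)] at h3
    rw [h]
    calc ‖μ‖ = c * (c⁻¹ * ‖μ‖) := by field_simp
    _ ≤ c * specRad A := by nlinarith [norm_nonneg μ]
  · obtain ⟨μ, hμ, h⟩ := specRad_mem hN A
    have h2 := abs_le_specRad (c • A) (root_smul hc.ne' A hμ)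
    rw [habs, abs_of_pos hc] at h2
    rw [h]; exact h2

lemma diag_root (v : Fin N → ℝ) (i : Fin N) :
    (cm (Matrix.diagonal v)).charpoly.IsRoot ((v i : ℂ)) := by
  rw [IsRoot, charpoly_eval]
  have h : cm (Matrix.diagonal v) = Matrix.diagonal (fun j => ((v j : ℝ) : ℂ)) := by
    simp [cm, Matrix.diagonal_map]
  have h2 : Matrix.scalar (Fin N) ((v i : ℝ) : ℂ) - Matrix.diagonal (fun j => ((v j : ℝ) : ℂ))
      = Matrix.diagonal (fun j => ((v i : ℝ) : ℂ) - ((v j : ℝ) : ℂ)) := by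
    rw [← Matrix.diagonal_sub]; rfl
  rw [h, h2, Matrix.det_diagonal]
  exact Finset.prod_eq_zero (Finset.mem_univ i) (sub_self _)

lemma diag_le_specRad (hN : 1 ≤ N) (v : Fin N → ℝ) (i : Fin N) (hv : 0 ≤ v i) :
    v i ≤ specRad (Matrix.diagonal v) := by
  have := abs_le_specRad (Matrix.diagonal v) (diag_root v i)
  rwa [Complex.norm_real, Real.norm_eq_abs, abs_of_nonneg hv] at this

end SpecRadAux

namespace SpecRadAux

open Matrix

section G

variable {N : ℕ} (hN : 1 ≤ N) {d : Fin N → ℝ} (hd : ∀ i, 0 < d i)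
  {B : Matrix (Fin N) (Fin N) ℝ} (hB : ∀ i j, 0 ≤ B i j)

lemma entry_apply (t : ℝ) (i j : Fin N) :
    (t • Matrix.diagonal d + B) i j = t * (if i = j then d i else 0) + B i j := by
  simp [Matrix.add_apply, Matrix.smul_apply, Matrix.diagonal_apply, smul_eq_mul]

include hd hB in
lemma entry_nonneg {t : ℝ} (ht : 0 ≤ t) (i j : Fin N) :
    0 ≤ (t • Matrix.diagonal d + B) i j := by
  rw [entry_apply]
  refine add_nonneg ?_ (hB i j)
  by_cases h : i = j
  · simp only [h, if_true]; exact mul_nonneg ht (hd j).le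
  · simp [h]

include hN hd hB in
lemma g_mono {s t : ℝ} (hs : 0 ≤ s) (hst : s ≤ t) :
    specRad (s • Matrix.diagonal d + B) ≤ specRad (t • Matrix.diagonal d + B) := by
  apply specRad_mono hN (entry_nonneg hd hB hs)
  intro i j
  rw [entry_apply, entry_apply]
  have : s * (if i = j then d i else 0) ≤ t * (if i = j then d i else 0) := by
    by_cases h : i = j
    · simp only [h, if_true]; exact mul_le_mul_of_nonneg_right hst (hd j).le
    · simp [h]
  linarith

include hN hd hB in
lemma gB_le {t : ℝ} (ht : 0 ≤ t) :
    specRad B ≤ specRad (t • Matrix.diagonal d + B) := by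
  apply specRad_mono hN hB
  intro i j
  rw [entry_apply]
  have : 0 ≤ t * (if i = j then d i else 0) := by
    by_cases h : i = j
    · simp only [h, if_true]; exact mul_nonneg ht (hd j).le
    · simp [h]
  linarith

include hN hd hB in
lemma g_lower {t : ℝ} (ht : 0 ≤ t) (i : Fin N) :
    t * d i ≤ specRad (t • Matrix.diagonal d + B) := by
  have h1 : t * d i ≤ specRad (Matrix.diagonal (fun j => t * d j)) :=
    diag_le_specRad hN (fun j => t * d j) i (mul_nonneg ht (hd i).le)
  refine le_trans h1 (specRad_mono hN ?_ ?_)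
  · intro i' j'
    by_cases h : i' = j'
    · simp only [Matrix.diagonal_apply, h, if_true]; exact mul_nonneg ht (hd j').le
    · simp [Matrix.diagonal_apply, h]
  · intro i' j'
    rw [entry_apply]
    by_cases h : i' = j'
    · simp only [Matrix.diagonal_apply, h, if_true]; linarith [hB j' j']
    · simp only [Matrix.diagonal_apply, h, if_false]
      have : 0 ≤ (0:ℝ) + B i' j' := by simpa using hB i' j'
      linarith [hB i' j']

include hN hd hB in
lemma g_scale {s t : ℝ} (hs : 0 < s) (hst : s ≤ t) :
    s * specRad (t • Matrix.diagonal d + B) ≤ t * specRad (s • Matrix.diagonal d + B) := by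
  have hts : (0:ℝ) < t / s := div_pos (lt_of_lt_of_le hs hst) hs
  have h1 : specRad (t • Matrix.diagonal d + B)
      ≤ specRad ((t/s) • (s • Matrix.diagonal d + B)) := by
    apply specRad_mono hN (entry_nonneg hd hB (le_trans hs.le hst))
    intro i j
    rw [Matrix.smul_apply, entry_apply, entry_apply, smul_eq_mul]
    have h2 : (1:ℝ) ≤ t / s := (one_le_div hs).2 hst
    have hBle : B i j ≤ t / s * B i j := le_mul_of_one_le_left (hB i j) h2
    by_cases h : i = j
    · simp only [h, if_true]
      have h3 : t / s * (s * d j) = t * d j := by field_simp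
      rw [mul_add, h3]
      subst h
      linarith
    · simp only [h, if_false, mul_zero, zero_add, mul_add]
      linarith
  rw [specRad_smul hN hts] at h1
  have h4 := mul_le_mul_of_nonneg_left h1 hs.le
  calc s * specRad (t • Matrix.diagonal d + B)
      ≤ s * (t / s * specRad (s • Matrix.diagonal d + B)) := h4
    _ = t * specRad (s • Matrix.diagonal d + B) := by field_simp

end G

end SpecRadAux

namespace SpecRadAux

set_option maxHeartbeats 1600000 in
/-- Abstract minimization: if `g : ℝ → ℝ` is nonnegative, monotone on `[0,∞)`,
satisfies the scaling bound `s * g t ≤ t * g s`, and the coercivity bounds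
`r ≤ g t` and `t * d0 ≤ g t`, then `λ ↦ g (λ²)/λ` attains a positive minimum
on `(0,∞)`. -/
lemma min_exists (g : ℝ → ℝ)
    (hgnn : ∀ t, 0 ≤ g t)
    (hmono : ∀ s t : ℝ, 0 ≤ s → s ≤ t → g s ≤ g t)
    (hscale : ∀ s t : ℝ, 0 < s → s ≤ t → s * g t ≤ t * g s)
    (r d0 : ℝ) (hr : 0 < r) (hd0 : 0 < d0)
    (hrg : ∀ t : ℝ, 0 ≤ t → r ≤ g t)
    (hlow : ∀ t : ℝ, 0 ≤ t → t * d0 ≤ g t) :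
    ∃ lam : ℝ, 0 < lam ∧ (∀ l : ℝ, 0 < l → g (lam ^ 2) / lam ≤ g (l ^ 2) / l) ∧
      0 < g (lam ^ 2) / lam := by
  set Φ : ℝ → ℝ := fun l => g (l ^ 2) / l with hΦ
  set M1 : ℝ := g 1 with hM1def
  have hM1r : r ≤ M1 := hrg 1 (by norm_num)
  have hM1d : d0 ≤ M1 := by have := hlow 1 (by norm_num); linarith
  have hM1 : 0 < M1 := lt_of_lt_of_le hr hM1r
  set a : ℝ := r / (2 * M1) with hadef
  have ha : 0 < a := div_pos hr (by positivity)
  have ha1 : a ≤ 1 := by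
    rw [hadef, div_le_one (by positivity)]
    linarith
  set b : ℝ := (M1 + 1) / d0 with hbdef
  have hb1 : 1 ≤ b := by
    rw [hbdef, le_div_iff₀ hd0]
    linarith
  have hab : a ≤ b := le_trans ha1 hb1
  have hb : 0 < b := lt_of_lt_of_le (lt_of_lt_of_le ha ha1) hb1
  -- continuity on Icc a b
  have hGlip : LipschitzOnWith (Real.toNNReal (2 * b * g (b ^ 2) / a ^ 2))
      (fun l => g (l ^ 2)) (Set.Icc a b) := by
    rw [lipschitzOnWith_iff_dist_le_mul]
    have key : ∀ x ∈ Set.Icc a b, ∀ y ∈ Set.Icc a b, x ≤ y →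
        g (y ^ 2) - g (x ^ 2) ≤ (2 * b * g (b ^ 2) / a ^ 2) * (y - x) := by
      intro x hx y hy hxy
      have hx0 : 0 < x := lt_of_lt_of_le ha hx.1
      have hsq : x ^ 2 ≤ y ^ 2 := by nlinarith
      have hmono' : g (x ^ 2) ≤ g (y ^ 2) := hmono _ _ (by positivity) hsq
      have hscale' : x ^ 2 * g (y ^ 2) ≤ y ^ 2 * g (x ^ 2) :=
        hscale _ _ (by positivity) hsq
      have hgb : g (x ^ 2) ≤ g (b ^ 2) := hmono _ _ (by positivity) (by nlinarith [hx.2, hx0])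
      have ha2x : a ^ 2 ≤ x ^ 2 := by nlinarith [hx.1]
      rw [div_mul_eq_mul_div, le_div_iff₀ (by positivity)]
      have h1 : a ^ 2 * (g (y ^ 2) - g (x ^ 2)) ≤ x ^ 2 * (g (y ^ 2) - g (x ^ 2)) := by
        nlinarith
      have h2 : x ^ 2 * (g (y ^ 2) - g (x ^ 2)) ≤ (y ^ 2 - x ^ 2) * g (x ^ 2) := by nlinarith
      have h3 : (y ^ 2 - x ^ 2) * g (x ^ 2) ≤ 2 * b * (y - x) * g (b ^ 2) := by
        have e1 : (y + x) * ((y - x) * g (x ^ 2)) ≤ 2 * b * ((y - x) * g (x ^ 2)) :=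
          mul_le_mul_of_nonneg_right (by linarith [hx.2, hy.2])
            (mul_nonneg (by linarith) (hgnn _))
        have e2 : 2 * b * ((y - x) * g (x ^ 2)) ≤ 2 * b * ((y - x) * g (b ^ 2)) :=
          mul_le_mul_of_nonneg_left
            (mul_le_mul_of_nonneg_left hgb (by linarith)) (by linarith)
        nlinarith [e1, e2]
      nlinarith
    intro x hx y hy
    have hK : (Real.toNNReal (2 * b * g (b ^ 2) / a ^ 2) : ℝ) = 2 * b * g (b ^ 2) / a ^ 2 :=
      Real.coe_toNNReal _ (by
        have h5 := hgnn (b ^ 2)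
        positivity)
    rw [hK, Real.dist_eq, Real.dist_eq]
    rcases le_total x y with h | h
    · have hk := key x hx y hy h
      have hm : g (x ^ 2) ≤ g (y ^ 2) := by
        have hx0 : 0 < x := lt_of_lt_of_le ha hx.1
        exact hmono _ _ (by positivity) (by nlinarith)
      rw [abs_of_nonpos (by linarith), abs_of_nonpos (by linarith)]
      linarith
    · have hk := key y hy x hx h
      have hm : g (y ^ 2) ≤ g (x ^ 2) := by
        have hy0 : 0 < y := lt_of_lt_of_le ha hy.1
        exact hmono _ _ (by positivity) (by nlinarith)
      rw [abs_of_nonneg (by linarith), abs_of_nonneg (by linarith)]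
      linarith
  have hΦcont : ContinuousOn Φ (Set.Icc a b) := by
    apply ContinuousOn.div hGlip.continuousOn continuousOn_id
    intro x hx
    exact ne_of_gt (lt_of_lt_of_le ha hx.1)
  obtain ⟨lam, hlam_mem, hmin⟩ := isCompact_Icc.exists_isMinOn ⟨1, ha1, hb1⟩ hΦcont
  have hlam0 : 0 < lam := lt_of_lt_of_le ha hlam_mem.1
  have hΦ1 : Φ 1 = M1 := by simp [hΦ, hM1def]
  have hlam_le1 : Φ lam ≤ M1 := by rw [← hΦ1]; exact hmin ⟨ha1, hb1⟩
  refine ⟨lam, hlam0, ?_, ?_⟩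
  · intro l hl
    by_cases hcase : l ∈ Set.Icc a b
    · exact hmin hcase
    · rw [Set.mem_Icc, not_and_or, not_le, not_le] at hcase
      rcases hcase with hla | hbl
      · have h1 : r ≤ g (l ^ 2) := hrg _ (by positivity)
        have h2 : r / l ≤ Φ l := div_le_div_of_nonneg_right h1 hl.le
        have haM : a * (2 * M1) = r := by rw [hadef]; field_simp
        have h3 : 2 * M1 ≤ r / l := by
          rw [le_div_iff₀ hl]
          nlinarith
        show Φ lam ≤ Φ l
        linarith
      · have h1 : l ^ 2 * d0 ≤ g (l ^ 2) := hlow _ (by positivity)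
        have h2 : l * d0 ≤ Φ l := by
          rw [hΦ]
          show l * d0 ≤ g (l ^ 2) / l
          rw [le_div_iff₀ hl]
          nlinarith
        have hbd : b * d0 = M1 + 1 := by rw [hbdef]; field_simp
        show Φ lam ≤ Φ l
        nlinarith
  · have h1 : lam ^ 2 * d0 ≤ g (lam ^ 2) := hlow _ (by positivity)
    have h2 : 0 < g (lam ^ 2) := lt_of_lt_of_le (by positivity) h1
    exact div_pos h2 hlam0

end SpecRadAux

open SpecRadAux in
theorem stmt_2 (N : ℕ) (hN : 1 ≤ N) (d : Fin N → ℝ) (hd : ∀ i, 0 < d i)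
    (B : Matrix (Fin N) (Fin N) ℝ) (hB : ∀ i j, 0 ≤ B i j) (hρ : 0 < specRad B) :
    ∃ lam : ℝ, lam ∈ Set.Ioi (0 : ℝ) ∧
      specRad ((lam ^ 2) • Matrix.diagonal d + B) / lam =
        sInf ((fun μ : ℝ => specRad ((μ ^ 2) • Matrix.diagonal d + B) / μ) '' Set.Ioi 0) ∧
      0 < specRad ((lam ^ 2) • Matrix.diagonal d + B) / lam := by
  classical
  obtain ⟨lam, hlam0, hglob, hpos⟩ :=
    min_exists (fun t => specRad (t • Matrix.diagonal d + B))
      (fun t => specRad_nonneg hN _)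
      (fun s t hs hst => g_mono hN hd hB hs hst)
      (fun s t hs hst => g_scale hN hd hB hs hst)
      (specRad B) (d ⟨0, hN⟩) hρ (hd _)
      (fun t ht => gB_le hN hd hB ht)
      (fun t ht => g_lower hN hd hB ht ⟨0, hN⟩)
  refine ⟨lam, Set.mem_Ioi.2 hlam0, ?_, hpos⟩
  have hleast : IsLeast
      ((fun μ : ℝ => specRad ((μ ^ 2) • Matrix.diagonal d + B) / μ) '' Set.Ioi 0)
      (specRad ((lam ^ 2) • Matrix.diagonal d + B) / lam) := by
    constructor
    · exact ⟨lam, Set.mem_Ioi.2 hlam0, rfl⟩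
    · rintro y ⟨l, hl, rfl⟩
      exact hglob l (Set.mem_Ioi.1 hl)
  exact hleast.csInf_eq.symm
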